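/- Let H be the r-subdivision of a graph G, and v an eigenfunction of B_H with unitary eigenvalue λ. Define u on oriented edges of G by u_{k→l} = v_{k→k_1(l)} when deg(k) > 2 (where k_1(l) is the first subdivision node on the chain from k to l), and u_{k→j} = u_{i→k}/λ^r when deg(k) = 2 with neighbors i, j. Then u is an eigenfunction of B_G with eigenvalue λ^r. -/

import Mathlib

open SimpleGraph Matrix

/-- The non-backtracking matrix of a simple graph, indexed by oriented edges (darts). -/
def nbMatrix {V : Type} [Fintype V] [DecidableEq V] (G : SimpleGraph V) [DecidableRel G.Adj] :
    Matrix G.Dart G.Dart ℂ :=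
  fun d e => if e.toProd.2 = d.toProd.1 ∧ e.toProd.1 ≠ d.toProd.2 then 1 else 0

/-- The `r`-subdivision of a simple graph `G`: each edge `e` of `G`, with endpoints
`(Quot.out e).1` and `(Quot.out e).2`, is replaced by the path
`(Quot.out e).1, (e,0), (e,1), …, (e,r-2), (Quot.out e).2` through `r − 1` new
degree-2 nodes. (For `r = 1` the subdivision is `G` itself.) -/
def subdiv {V : Type} [Fintype V] [DecidableEq V] (G : SimpleGraph V) (r : ℕ) :
    SimpleGraph (V ⊕ (G.edgeSet × Fin (r - 1))) where
  Adj x y :=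
    match x, y with
    | Sum.inl a, Sum.inl b => r = 1 ∧ G.Adj a b
    | Sum.inl a, Sum.inr (e, i) =>
        (a = (Quot.out (e : Sym2 V)).1 ∧ (i : ℕ) = 0) ∨
          (a = (Quot.out (e : Sym2 V)).2 ∧ (i : ℕ) = r - 2)
    | Sum.inr (e, i), Sum.inl b =>
        (b = (Quot.out (e : Sym2 V)).1 ∧ (i : ℕ) = 0) ∨
          (b = (Quot.out (e : Sym2 V)).2 ∧ (i : ℕ) = r - 2)
    | Sum.inr (e, i), Sum.inr (f, j) => e = f ∧ ((i : ℕ) + 1 = (j : ℕ) ∨ (j : ℕ) + 1 = (i : ℕ))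
  symm := by
    constructor
    intro x y h
    rcases x with a | ⟨e, i⟩ <;> rcases y with b | ⟨f, j⟩ <;> simp_all
    · exact h.2.symm
    · tauto
  loopless := by
    constructor
    intro x h
    rcases x with a | ⟨e, i⟩
    · exact G.irrefl h.2
    · rcases h with ⟨-, h | h⟩ <;> omega

noncomputable instance subdivAdjDec {V : Type} [Fintype V] [DecidableEq V] (G : SimpleGraph V)
    (r : ℕ) : DecidableRel (subdiv G r).Adj := fun _ _ => Classical.propDecidable _


set_option linter.unusedSectionVars false
set_option maxHeartbeats 1000000
namespace SubdivAux


variable {V : Type} [Fintype V] [DecidableEq V] {G : SimpleGraph V} [DecidableRel G.Adj] {r : ℕ}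

lemma out_or (d : G.Dart) :
    (Quot.out (s(d.toProd.1, d.toProd.2))).1 = d.toProd.1 ∧
      (Quot.out (s(d.toProd.1, d.toProd.2))).2 = d.toProd.2 ∨
    (Quot.out (s(d.toProd.1, d.toProd.2))).1 = d.toProd.2 ∧
      (Quot.out (s(d.toProd.1, d.toProd.2))).2 = d.toProd.1 := by
  have h : s((Quot.out (s(d.toProd.1, d.toProd.2))).1, (Quot.out (s(d.toProd.1, d.toProd.2))).2)
      = s(d.toProd.1, d.toProd.2) :=
    Quot.out_eq (s(d.toProd.1, d.toProd.2))
  rw [Sym2.eq_iff] at h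
  exact h

/-- the `j`-th vertex on the subdivision chain of the dart `d`. -/
noncomputable def hnode (d : G.Dart) (j : ℕ) : V ⊕ (G.edgeSet × Fin (r - 1)) :=
  if hj : 1 ≤ j ∧ j ≤ r - 1 then
    Sum.inr (⟨s(d.toProd.1, d.toProd.2), G.mem_edgeSet.mpr d.adj⟩,
      ⟨if d.toProd.1 = (Quot.out (s(d.toProd.1, d.toProd.2))).1 then j - 1 else r - 1 - j,
        by split <;> omega⟩)
  else if j = 0 then Sum.inl d.toProd.1 else Sum.inl d.toProd.2

lemma hnode_zero (d : G.Dart) : hnode (r := r) d 0 = Sum.inl d.toProd.1 := by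
  simp [hnode]

lemma hnode_ge (hr : 1 ≤ r) (d : G.Dart) {j : ℕ} (hj : r ≤ j) :
    hnode (r := r) d j = Sum.inl d.toProd.2 := by
  have h1 : ¬ (1 ≤ j ∧ j ≤ r - 1) := by omega
  have h2 : j ≠ 0 := by omega
  simp [hnode, h1, h2]

lemma hnode_mid (d : G.Dart) {j : ℕ} (h1 : 1 ≤ j) (h2 : j ≤ r - 1) :
    hnode (r := r) d j =
      Sum.inr (⟨s(d.toProd.1, d.toProd.2), G.mem_edgeSet.mpr d.adj⟩,
        ⟨if d.toProd.1 = (Quot.out (s(d.toProd.1, d.toProd.2))).1 then j - 1 else r - 1 - j,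
          by split <;> omega⟩) := by
  simp [hnode, h1, h2]

/-- inverse position function -/
noncomputable def hpos (d : G.Dart) : (V ⊕ (G.edgeSet × Fin (r - 1))) → ℕ
  | Sum.inl x => if x = d.toProd.1 then 0 else r
  | Sum.inr (_, i) =>
      if d.toProd.1 = (Quot.out (s(d.toProd.1, d.toProd.2))).1 then (i : ℕ) + 1
      else r - 1 - (i : ℕ)

lemma hpos_hnode (hr : 1 ≤ r) (d : G.Dart) {j : ℕ} (hj : j ≤ r) :
    hpos d (hnode (r := r) d j) = j := by
  rcases (by omega : j = 0 ∨ (1 ≤ j ∧ j ≤ r - 1) ∨ j = r) with h | h | h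
  · subst h; rw [hnode_zero]; simp [hpos]
  · rw [hnode_mid d h.1 h.2]
    simp only [hpos]
    split <;> omega
  · subst h; rw [hnode_ge hr d le_rfl]
    simp only [hpos]
    rw [if_neg (fun hh => d.adj.ne hh.symm)]

lemma hnode_inj (hr : 1 ≤ r) (d : G.Dart) {j j' : ℕ} (hj : j ≤ r) (hj' : j' ≤ r)
    (h : hnode (r := r) d j = hnode (r := r) d j') : j = j' := by
  have := congrArg (hpos d) h
  rwa [hpos_hnode hr d hj, hpos_hnode hr d hj'] at this

lemma hnode_symm (hr : 1 ≤ r) (d : G.Dart) {j : ℕ} (hj : j ≤ r) :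
    hnode (r := r) d.symm j = hnode (r := r) d (r - j) := by
  have hsw : s(d.toProd.2, d.toProd.1) = s(d.toProd.1, d.toProd.2) := Sym2.eq_swap
  have h1 : d.symm.toProd.1 = d.toProd.2 := rfl
  have h2 : d.symm.toProd.2 = d.toProd.1 := rfl
  rcases (by omega : j = 0 ∨ (1 ≤ j ∧ j ≤ r - 1) ∨ j = r) with h | h | h
  · subst h
    rw [hnode_zero, hnode_ge hr d (by omega), h1]
  · rw [hnode_mid d.symm h.1 h.2, hnode_mid d (by omega : 1 ≤ r - j) (by omega)]
    refine congrArg Sum.inr (Prod.ext (Subtype.ext ?_) (Fin.ext ?_))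
    · exact hsw
    · show (if d.toProd.2 = (Quot.out (s(d.toProd.2, d.toProd.1))).1 then j - 1 else r - 1 - j)
        = (if d.toProd.1 = (Quot.out (s(d.toProd.1, d.toProd.2))).1 then r - j - 1
            else r - 1 - (r - j))
      rw [hsw]
      rcases out_or d with ⟨o1, o2⟩ | ⟨o1, o2⟩
      · rw [if_neg (fun hh => d.adj.ne (o1 ▸ hh).symm), if_pos o1.symm]
        omega
      · rw [if_pos o1.symm, if_neg (fun hh => d.adj.ne (o1 ▸ hh))]
        omega
  · subst h
    rw [hnode_ge hr d.symm le_rfl, Nat.sub_self, hnode_zero, h2]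


lemma hnode_adj (d : G.Dart) {j : ℕ} (hj : j < r) :
    (subdiv G r).Adj (hnode (r := r) d j) (hnode (r := r) d (j + 1)) := by
  have hr : 1 ≤ r := by omega
  rcases (by omega : (j = 0 ∧ r = 1) ∨ (j = 0 ∧ 2 ≤ r) ∨ (1 ≤ j ∧ j + 1 ≤ r - 1) ∨
      (1 ≤ j ∧ j = r - 1)) with ⟨h1, h2⟩ | ⟨h1, h2⟩ | ⟨h1, h2⟩ | ⟨h1, h2⟩
  · subst h1
    rw [hnode_zero, hnode_ge hr d (by omega)]
    show r = 1 ∧ G.Adj d.toProd.1 d.toProd.2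
    exact ⟨h2, d.adj⟩
  · subst h1
    rw [hnode_zero, hnode_mid d (by omega) (by omega)]
    show (d.toProd.1 = (Quot.out (s(d.toProd.1, d.toProd.2))).1 ∧ _) ∨
      (d.toProd.1 = (Quot.out (s(d.toProd.1, d.toProd.2))).2 ∧ _)
    rcases out_or d with ⟨o1, o2⟩ | ⟨o1, o2⟩
    · left
      refine ⟨o1.symm, ?_⟩
      simp only [Fin.val_mk]
      rw [if_pos o1.symm]
    · right
      refine ⟨o2.symm, ?_⟩
      simp only [Fin.val_mk]
      rw [if_neg (fun hh => d.adj.ne (o1 ▸ hh))]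
      omega
  · rw [hnode_mid d (by omega) (by omega), hnode_mid d (by omega) (by omega)]
    refine ⟨rfl, ?_⟩
    simp only [Fin.val_mk]
    split <;> omega
  · rw [hnode_mid d h1 (by omega), hnode_ge hr d (by omega)]
    show (d.toProd.2 = (Quot.out (s(d.toProd.1, d.toProd.2))).1 ∧ _) ∨
      (d.toProd.2 = (Quot.out (s(d.toProd.1, d.toProd.2))).2 ∧ _)
    rcases out_or d with ⟨o1, o2⟩ | ⟨o1, o2⟩
    · right
      refine ⟨o2.symm, ?_⟩
      simp only [Fin.val_mk]
      rw [if_pos o1.symm]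
      omega
    · left
      refine ⟨o1.symm, ?_⟩
      simp only [Fin.val_mk]
      rw [if_neg (fun hh => d.adj.ne (hh.trans o1))]
      omega

/-- the `j`-th dart on the subdivision chain of `d`. -/
noncomputable def chainD (d : G.Dart) (j : ℕ) (hj : j < r) : (subdiv G r).Dart :=
  ⟨(hnode (r := r) d j, hnode (r := r) d (j + 1)), hnode_adj d hj⟩

@[simp] lemma chainD_fst (d : G.Dart) (j : ℕ) (hj : j < r) :
    (chainD d j hj).toProd.1 = hnode (r := r) d j := rfl

@[simp] lemma chainD_snd (d : G.Dart) (j : ℕ) (hj : j < r) :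
    (chainD d j hj).toProd.2 = hnode (r := r) d (j + 1) := rfl

lemma chainD_symm (d : G.Dart) (j : ℕ) (hj : j < r) :
    (chainD d j hj).symm = chainD d.symm (r - 1 - j) (by omega) := by
  apply SimpleGraph.Dart.ext
  show (hnode (r := r) d (j+1), hnode (r := r) d j) =
    (hnode (r := r) d.symm (r - 1 - j), hnode (r := r) d.symm (r - 1 - j + 1))
  rw [hnode_symm (by omega) d (by omega), hnode_symm (by omega) d (by omega),
    (by omega : r - (r - 1 - j) = j + 1), (by omega : r - 1 - j + 1 = r - j),
    (by omega : r - (r - j) = j)]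

lemma chainD_zero_snd (hr : 1 ≤ r) (d : G.Dart) :
    (chainD (r := r) d 0 hr).toProd.2 = hnode (r := r) d 1 := rfl

lemma hnode_mid_eq (c : G.Dart) {j : ℕ} (h1 : 1 ≤ j) (h2 : j ≤ r - 1) (f : G.edgeSet)
    (i : Fin (r - 1)) (hf : (f : Sym2 V) = s(c.toProd.1, c.toProd.2))
    (hival : (i : ℕ) =
      if c.toProd.1 = (Quot.out (s(c.toProd.1, c.toProd.2))).1 then j - 1 else r - 1 - j) :
    hnode (r := r) c j = Sum.inr (f, i) := by
  rw [hnode_mid c h1 h2]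
  exact congrArg Sum.inr (Prod.ext (Subtype.ext hf) (Fin.ext hival)).symm

lemma dart_into_inl (hr : 1 ≤ r) (E : (subdiv G r).Dart) (k : V)
    (hE : E.toProd.2 = Sum.inl k) :
    ∃ c : G.Dart, c.toProd.2 = k ∧ E = chainD c (r - 1) (by omega) := by
  obtain ⟨⟨x, y⟩, adj⟩ := E
  have hy : y = Sum.inl k := hE
  subst hy
  rcases x with a | ⟨f, i⟩
  · have hadj : r = 1 ∧ G.Adj a k := adj
    refine ⟨⟨(a, k), hadj.2⟩, rfl, ?_⟩
    apply SimpleGraph.Dart.ext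
    show (Sum.inl a, Sum.inl k) =
      (hnode (r := r) (⟨(a, k), hadj.2⟩ : G.Dart) (r - 1),
        hnode (r := r) (⟨(a, k), hadj.2⟩ : G.Dart) (r - 1 + 1))
    rw [congrArg (hnode (r := r) (⟨(a, k), hadj.2⟩ : G.Dart)) (by omega : r - 1 = 0),
      hnode_zero, hnode_ge (by omega) _ (by omega)]
  · have hi2 : (i : ℕ) < r - 1 := i.2
    have hr2 : 2 ≤ r := by omega
    have hadj : (k = (Quot.out (f : Sym2 V)).1 ∧ (i : ℕ) = 0) ∨
        (k = (Quot.out (f : Sym2 V)).2 ∧ (i : ℕ) = r - 2) := adj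
    have hfe : s((Quot.out (f : Sym2 V)).1, (Quot.out (f : Sym2 V)).2) = (f : Sym2 V) := Quot.out_eq _
    have hadj2 : G.Adj (Quot.out (f : Sym2 V)).1 (Quot.out (f : Sym2 V)).2 := by
      rw [← SimpleGraph.mem_edgeSet]
      rw [show s((Quot.out (f : Sym2 V)).1, (Quot.out (f : Sym2 V)).2) =
        s((Quot.out (f : Sym2 V)).1, (Quot.out (f : Sym2 V)).2) from rfl, hfe]
      exact f.2
    have hss : s((Quot.out (f : Sym2 V)).2, (Quot.out (f : Sym2 V)).1) = (f : Sym2 V) :=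
      Sym2.eq_swap.trans hfe
    rcases hadj with ⟨hk, hi⟩ | ⟨hk, hi⟩
    · subst hk
      refine ⟨⟨((Quot.out (f : Sym2 V)).2, (Quot.out (f : Sym2 V)).1), hadj2.symm⟩, rfl, ?_⟩
      apply SimpleGraph.Dart.ext
      refine Prod.ext ?_ ?_
      · show Sum.inr (f, i) = hnode (r := r) _ (r - 1)
        refine (hnode_mid_eq _ (by omega) (by omega) f i hss.symm ?_).symm
        show (i : ℕ) = if (Quot.out (f : Sym2 V)).2 =
            (Quot.out (s((Quot.out (f : Sym2 V)).2, (Quot.out (f : Sym2 V)).1))).1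
          then r - 1 - 1 else r - 1 - (r - 1)
        rw [hss, if_neg (fun hh => hadj2.ne' hh)]
        omega
      · show Sum.inl ((Quot.out (f : Sym2 V)).1) = hnode (r := r) _ (r - 1 + 1)
        rw [hnode_ge (by omega) _ (by omega)]
    · subst hk
      refine ⟨⟨((Quot.out (f : Sym2 V)).1, (Quot.out (f : Sym2 V)).2), hadj2⟩, rfl, ?_⟩
      apply SimpleGraph.Dart.ext
      refine Prod.ext ?_ ?_
      · show Sum.inr (f, i) = hnode (r := r) _ (r - 1)
        refine (hnode_mid_eq _ (by omega) (by omega) f i hfe.symm ?_).symm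
        show (i : ℕ) = if (Quot.out (f : Sym2 V)).1 =
            (Quot.out (s((Quot.out (f : Sym2 V)).1, (Quot.out (f : Sym2 V)).2))).1
          then r - 1 - 1 else r - 1 - (r - 1)
        rw [show s((Quot.out (f : Sym2 V)).1, (Quot.out (f : Sym2 V)).2) = (f : Sym2 V) from hfe,
          if_pos rfl]
        omega
      · show Sum.inl ((Quot.out (f : Sym2 V)).2) = hnode (r := r) _ (r - 1 + 1)
        rw [hnode_ge (by omega) _ (by omega)]

lemma chainD_last_inj {k : V} {c c' : G.Dart} (hr : 1 ≤ r) (hc : c.toProd.2 = k)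
    (hc' : c'.toProd.2 = k)
    (h : chainD (r := r) c (r - 1) (by omega) = chainD c' (r - 1) (by omega)) : c = c' := by
  have h1 : hnode (r := r) c (r - 1) = hnode (r := r) c' (r - 1) :=
    congrArg (fun E => E.toProd.1) h
  rcases (by omega : r = 1 ∨ 2 ≤ r) with hr1 | hr2
  · rw [congrArg (hnode (r := r) c) (by omega : r - 1 = 0),
      congrArg (hnode (r := r) c') (by omega : r - 1 = 0), hnode_zero, hnode_zero] at h1
    exact SimpleGraph.Dart.ext _ _ (Prod.ext (Sum.inl.inj h1) (hc.trans hc'.symm))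
  · rw [hnode_mid c (by omega) le_rfl, hnode_mid c' (by omega) le_rfl] at h1
    simp only [Sum.inr.injEq, Prod.mk.injEq, Subtype.mk.injEq] at h1
    have hs := h1.1
    rw [Sym2.eq_iff] at hs
    rcases hs with ⟨ha, hb⟩ | ⟨ha, hb⟩
    · exact SimpleGraph.Dart.ext _ _ (Prod.ext ha hb)
    · exact absurd (ha.trans (hc'.trans hc.symm)) c.adj.ne

lemma dart_into_mid (d : G.Dart) {j : ℕ} (h1 : 1 ≤ j) (h2 : j ≤ r - 1)
    (E : (subdiv G r).Dart) (hE : E.toProd.2 = hnode (r := r) d j) :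
    E = chainD d (j - 1) (by omega) ∨ E = (chainD d j (by omega)).symm := by
  have hr2 : 2 ≤ r := by omega
  obtain ⟨⟨x, y⟩, adj⟩ := E
  have hy : y = hnode (r := r) d j := hE
  subst hy
  suffices key : x = hnode (r := r) d (j - 1) ∨ x = hnode (r := r) d (j + 1) by
    rcases key with hx | hx
    · left
      apply SimpleGraph.Dart.ext
      show (x, hnode (r := r) d j) = (hnode (r := r) d (j - 1), hnode (r := r) d (j - 1 + 1))
      rw [hx, (by omega : j - 1 + 1 = j)]
    · right
      apply SimpleGraph.Dart.ext
      show (x, hnode (r := r) d j) = (hnode (r := r) d (j + 1), hnode (r := r) d j)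
      rw [hx]
  rw [hnode_mid d h1 h2] at adj
  rcases x with a | ⟨f, m⟩
  · have ha : (a = (Quot.out (s(d.toProd.1, d.toProd.2))).1 ∧
        (if d.toProd.1 = (Quot.out (s(d.toProd.1, d.toProd.2))).1 then j - 1 else r - 1 - j)
          = 0) ∨
        (a = (Quot.out (s(d.toProd.1, d.toProd.2))).2 ∧
        (if d.toProd.1 = (Quot.out (s(d.toProd.1, d.toProd.2))).1 then j - 1 else r - 1 - j)
          = r - 2) := adj
    rcases out_or d with ⟨o1, o2⟩ | ⟨o1, o2⟩
    · rw [if_pos o1.symm] at ha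
      rcases ha with ⟨haa, hii⟩ | ⟨haa, hii⟩
      · left
        rw [(by omega : j - 1 = 0), hnode_zero, haa, o1]
      · right
        rw [hnode_ge (by omega) d (by omega : r ≤ j + 1), haa, o2]
    · rw [if_neg (fun hh => d.adj.ne (hh.trans o1))] at ha
      rcases ha with ⟨haa, hii⟩ | ⟨haa, hii⟩
      · right
        rw [hnode_ge (by omega) d (by omega : r ≤ j + 1), haa, o1]
      · left
        rw [(by omega : j - 1 = 0), hnode_zero, haa, o2]
  · have hm2 : (m : ℕ) < r - 1 := m.2
    have ha : f = (⟨s(d.toProd.1, d.toProd.2), G.mem_edgeSet.mpr d.adj⟩ : G.edgeSet) ∧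
        ((m : ℕ) + 1 =
          (if d.toProd.1 = (Quot.out (s(d.toProd.1, d.toProd.2))).1 then j - 1 else r - 1 - j) ∨
         (if d.toProd.1 = (Quot.out (s(d.toProd.1, d.toProd.2))).1 then j - 1 else r - 1 - j)
           + 1 = (m : ℕ)) := adj
    obtain ⟨hf, hm⟩ := ha
    subst hf
    rcases out_or d with ⟨o1, o2⟩ | ⟨o1, o2⟩
    · rw [if_pos o1.symm] at hm
      rcases hm with hm | hm
      · left
        rw [hnode_mid d (by omega : 1 ≤ j - 1) (by omega)]
        refine congrArg Sum.inr (Prod.ext rfl (Fin.ext ?_))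
        show (m : ℕ) = if d.toProd.1 = (Quot.out (s(d.toProd.1, d.toProd.2))).1
          then j - 1 - 1 else r - 1 - (j - 1)
        rw [if_pos o1.symm]
        omega
      · right
        rw [hnode_mid d (by omega) (by omega : j + 1 ≤ r - 1)]
        refine congrArg Sum.inr (Prod.ext rfl (Fin.ext ?_))
        show (m : ℕ) = if d.toProd.1 = (Quot.out (s(d.toProd.1, d.toProd.2))).1
          then j + 1 - 1 else r - 1 - (j + 1)
        rw [if_pos o1.symm]
        omega
    · rw [if_neg (fun hh => d.adj.ne (hh.trans o1))] at hm
      rcases hm with hm | hm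
      · right
        rw [hnode_mid d (by omega) (by omega : j + 1 ≤ r - 1)]
        refine congrArg Sum.inr (Prod.ext rfl (Fin.ext ?_))
        show (m : ℕ) = if d.toProd.1 = (Quot.out (s(d.toProd.1, d.toProd.2))).1
          then j + 1 - 1 else r - 1 - (j + 1)
        rw [if_neg (fun hh => d.adj.ne (hh.trans o1))]
        omega
      · left
        rw [hnode_mid d (by omega : 1 ≤ j - 1) (by omega)]
        refine congrArg Sum.inr (Prod.ext rfl (Fin.ext ?_))
        show (m : ℕ) = if d.toProd.1 = (Quot.out (s(d.toProd.1, d.toProd.2))).1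
          then j - 1 - 1 else r - 1 - (j - 1)
        rw [if_neg (fun hh => d.adj.ne (hh.trans o1))]
        omega

section Spectral

/-- sum of `v` over darts into `w` -/
noncomputable def Sin (v : (subdiv G r).Dart → ℂ) (w : V ⊕ (G.edgeSet × Fin (r - 1))) : ℂ :=
  ∑ E ∈ Finset.univ.filter (fun E : (subdiv G r).Dart => E.toProd.2 = w), v E

/-- number of darts out of `w` -/
noncomputable def mout (G : SimpleGraph V) [DecidableRel G.Adj] (r : ℕ)
    (w : V ⊕ (G.edgeSet × Fin (r - 1))) : ℕ :=
  (Finset.univ.filter (fun D : (subdiv G r).Dart => D.toProd.1 = w)).card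

variable {lam : ℂ} {v : (subdiv G r).Dart → ℂ}

lemma sum_pred (v : (subdiv G r).Dart → ℂ) (D : (subdiv G r).Dart) :
    ∑ E ∈ Finset.univ.filter
      (fun E : (subdiv G r).Dart => E.toProd.2 = D.toProd.1 ∧ E.toProd.1 ≠ D.toProd.2), v E
      = Sin v D.toProd.1 - v D.symm := by
  have hset : Finset.univ.filter
      (fun E : (subdiv G r).Dart => E.toProd.2 = D.toProd.1 ∧ E.toProd.1 ≠ D.toProd.2)
      = (Finset.univ.filter
          (fun E : (subdiv G r).Dart => E.toProd.2 = D.toProd.1)).erase D.symm := by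
    ext E
    simp only [Finset.mem_filter, Finset.mem_erase, Finset.mem_univ, true_and]
    constructor
    · rintro ⟨h1, h2⟩
      exact ⟨fun hE => h2 (by rw [hE]; rfl), h1⟩
    · rintro ⟨h1, h2⟩
      refine ⟨h2, fun hE => h1 ?_⟩
      exact SimpleGraph.Dart.ext _ _ (Prod.ext hE h2)
  rw [hset, Finset.sum_erase_eq_sub (by simp only [Finset.mem_filter, Finset.mem_univ, true_and]; rfl)]
  rfl

lemma Bv_eq (hv : (nbMatrix (subdiv G r)).mulVec v = lam • v) (D : (subdiv G r).Dart) :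
    lam * v D = Sin v D.toProd.1 - v D.symm := by
  have h := congrFun hv D
  simp only [Pi.smul_apply, smul_eq_mul] at h
  rw [← h, ← sum_pred v D, Finset.sum_filter]
  show ∑ E : (subdiv G r).Dart, nbMatrix (subdiv G r) D E * v E = _
  apply Finset.sum_congr rfl
  intro E _
  by_cases hc : E.toProd.2 = D.toProd.1 ∧ E.toProd.1 ≠ D.toProd.2 <;>
    simp [nbMatrix, hc]

lemma pred_unique (hv : (nbMatrix (subdiv G r)).mulVec v = lam • v)
    (w : V ⊕ (G.edgeSet × Fin (r - 1))) (E₁ E₂ D : (subdiv G r).Dart)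
    (h1 : E₁.toProd.2 = w) (h2 : E₂.toProd.2 = w) (hne : E₁ ≠ E₂)
    (hcl : ∀ E : (subdiv G r).Dart, E.toProd.2 = w → E = E₁ ∨ E = E₂)
    (hD1 : D.toProd.1 = w) (hD2 : E₁.toProd.1 ≠ D.toProd.2) :
    lam * v D = v E₁ := by
  have hset : Finset.univ.filter (fun E : (subdiv G r).Dart => E.toProd.2 = D.toProd.1)
      = {E₁, E₂} := by
    ext E
    simp only [Finset.mem_filter, Finset.mem_univ, true_and, Finset.mem_insert,
      Finset.mem_singleton]
    constructor
    · intro hE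
      exact hcl E (hD1 ▸ hE)
    · rintro (rfl | rfl)
      · rw [h1, hD1]
      · rw [h2, hD1]
  have hsymm : D.symm = E₂ := by
    have hm : D.symm.toProd.2 = w := by rw [← hD1]; rfl
    rcases hcl D.symm hm with h | h
    · exact absurd (congrArg (fun x => x.toProd.1) h).symm hD2
    · exact h
  rw [Bv_eq hv D]
  show Sin v D.toProd.1 - v D.symm = v E₁
  rw [Sin, hset, Finset.sum_pair hne, hsymm]
  ring

lemma follow_sum (hv : (nbMatrix (subdiv G r)).mulVec v = lam • v) (E : (subdiv G r).Dart) :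
    ∑ D ∈ Finset.univ.filter
      (fun D : (subdiv G r).Dart => E.toProd.2 = D.toProd.1 ∧ E.toProd.1 ≠ D.toProd.2),
      (lam * v D)
      = ((mout G r E.toProd.2 : ℂ) - 2) * Sin v E.toProd.2 + v E := by
  classical
  set A := Finset.univ.filter
      (fun D : (subdiv G r).Dart => E.toProd.2 = D.toProd.1 ∧ E.toProd.1 ≠ D.toProd.2) with hA
  have hset : A = (Finset.univ.filter
      (fun D : (subdiv G r).Dart => D.toProd.1 = E.toProd.2)).erase E.symm := by
    ext D
    simp only [hA, Finset.mem_filter, Finset.mem_erase, Finset.mem_univ, true_and]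
    constructor
    · rintro ⟨hd1, hd2⟩
      refine ⟨fun hD => ?_, hd1.symm⟩
      rw [hD] at hd2
      exact hd2 rfl
    · rintro ⟨hd1, hd2⟩
      refine ⟨hd2.symm, fun hE1 => hd1 ?_⟩
      apply SimpleGraph.Dart.ext
      have : D.toProd = (D.toProd.1, D.toProd.2) := rfl
      rw [this, hd2, ← hE1]
      rfl
  have hEsymm_mem : E.symm ∈ Finset.univ.filter
      (fun D : (subdiv G r).Dart => D.toProd.1 = E.toProd.2) := by
    simp only [Finset.mem_filter, Finset.mem_univ, true_and]; rfl
  have hcard : A.card = mout G r E.toProd.2 - 1 := by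
    rw [hset, Finset.card_erase_of_mem hEsymm_mem]; rfl
  have hmout1 : 1 ≤ mout G r E.toProd.2 :=
    Finset.card_pos.mpr ⟨E.symm, hEsymm_mem⟩
  -- rewrite each term by Bv_eq
  have step1 : ∑ D ∈ A, (lam * v D)
      = (A.card : ℂ) * Sin v E.toProd.2 - ∑ D ∈ A, v D.symm := by
    have h1 : ∑ D ∈ A, (lam * v D) = ∑ D ∈ A, (Sin v E.toProd.2 - v D.symm) := by
      refine Finset.sum_congr rfl (fun D hD => ?_)
      rw [Bv_eq hv D]
      simp only [hA, Finset.mem_filter, Finset.mem_univ, true_and] at hD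
      rw [← hD.1]
    rw [h1, Finset.sum_sub_distrib, Finset.sum_const, nsmul_eq_mul]
  -- the sum of v over symm of A
  have step2 : ∑ D ∈ A, v D.symm = Sin v E.toProd.2 - v E := by
    have hbij : ∑ D ∈ A, v D.symm = ∑ D ∈ (Finset.univ.filter
        (fun D : (subdiv G r).Dart => D.toProd.2 = E.toProd.2)).erase E, v D := by
      refine Finset.sum_nbij' (fun D => D.symm) (fun D => D.symm) ?_ ?_ ?_ ?_ ?_
      · intro a ha
        rw [hset] at ha
        simp only [Finset.mem_erase, Finset.mem_filter, Finset.mem_univ, true_and] at ha ⊢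
        exact ⟨fun hc => ha.1 ((SimpleGraph.Dart.symm_symm a).symm.trans
          (congrArg SimpleGraph.Dart.symm hc)), ha.2⟩
      · intro a ha
        rw [hset]
        simp only [Finset.mem_erase, Finset.mem_filter, Finset.mem_univ, true_and] at ha ⊢
        exact ⟨fun hc => ha.1 ((SimpleGraph.Dart.symm_symm a).symm.trans
          ((congrArg SimpleGraph.Dart.symm hc).trans (SimpleGraph.Dart.symm_symm E))), ha.2⟩
      · intro a _; exact SimpleGraph.Dart.symm_symm a
      · intro a _; exact SimpleGraph.Dart.symm_symm a
      · intro a _; rfl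
    rw [hbij, Finset.sum_erase_eq_sub (by
      simp only [Finset.mem_filter, Finset.mem_univ, true_and])]
    rfl
  rw [step1, step2, hcard]
  rw [Nat.cast_sub hmout1]
  push_cast
  ring

lemma hnode_one_inj (hr : 1 ≤ r) (d d' : G.Dart) (h1 : d.toProd.1 = d'.toProd.1)
    (h : hnode (r := r) d 1 = hnode (r := r) d' 1) : d = d' := by
  rcases (by omega : r = 1 ∨ 2 ≤ r) with h2 | h2
  · rw [hnode_ge (by omega) d (by omega), hnode_ge (by omega) d' (by omega)] at h
    exact SimpleGraph.Dart.ext _ _ (Prod.ext h1 (Sum.inl.inj h))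
  · rw [hnode_mid d (by omega) (by omega), hnode_mid d' (by omega) (by omega)] at h
    simp only [Sum.inr.injEq, Prod.mk.injEq, Subtype.mk.injEq] at h
    have hs := h.1
    rw [Sym2.eq_iff] at hs
    rcases hs with ⟨ha, hb⟩ | ⟨ha, hb⟩
    · exact SimpleGraph.Dart.ext _ _ (Prod.ext ha hb)
    · exact absurd (h1.symm.trans ha) d'.adj.ne

lemma chainD0_mem (hr : 1 ≤ r) (k a : V) (ha : G.Adj k a) :
    chainD (r := r) (⟨(k, a), ha⟩ : G.Dart) 0 (by omega) ∈
      Finset.univ.filter (fun D : (subdiv G r).Dart => D.toProd.1 = Sum.inl k) := by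
  simp only [Finset.mem_filter, Finset.mem_univ, true_and, chainD_fst, hnode_zero]

lemma chainD0_inj (hr : 1 ≤ r) (k a b : V) (ha : G.Adj k a) (hb : G.Adj k b)
    (h : chainD (r := r) (⟨(k, a), ha⟩ : G.Dart) 0 (by omega)
      = chainD (r := r) (⟨(k, b), hb⟩ : G.Dart) 0 (by omega)) : a = b := by
  have h1 : hnode (r := r) (⟨(k, a), ha⟩ : G.Dart) 1 = hnode (r := r) (⟨(k, b), hb⟩ : G.Dart) 1 :=
    congrArg (fun D => D.toProd.2) h
  have h2 := hnode_one_inj hr (⟨(k, a), ha⟩ : G.Dart) (⟨(k, b), hb⟩ : G.Dart) rfl h1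
  exact congrArg (fun d => d.toProd.2) h2

lemma two_le_mout (hr : 1 ≤ r) (hmin : ∀ x : V, 2 ≤ G.degree x)
    (w : V ⊕ (G.edgeSet × Fin (r - 1))) : 2 ≤ mout G r w := by
  rcases w with k | ⟨e, i⟩
  · obtain ⟨a, ha, b, hb, hab⟩ := Finset.one_lt_card.mp (hmin k)
    rw [SimpleGraph.mem_neighborFinset] at ha hb
    exact Finset.one_lt_card.mpr ⟨_, chainD0_mem hr k a ha, _, chainD0_mem hr k b hb,
      fun hc => hab (chainD0_inj hr k a b ha hb hc)⟩
  · have hi2 : (i : ℕ) < r - 1 := i.2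
    have hr2 : 2 ≤ r := by omega
    have hfe : s((Quot.out (e : Sym2 V)).1, (Quot.out (e : Sym2 V)).2) = (e : Sym2 V) := Quot.out_eq _
    have hadj2 : G.Adj (Quot.out (e : Sym2 V)).1 (Quot.out (e : Sym2 V)).2 := by
      rw [← SimpleGraph.mem_edgeSet]
      rw [show s((Quot.out (e : Sym2 V)).1, (Quot.out (e : Sym2 V)).2) =
        s((Quot.out (e : Sym2 V)).1, (Quot.out (e : Sym2 V)).2) from rfl, hfe]
      exact e.2
    set d₀ : G.Dart := ⟨((Quot.out (e : Sym2 V)).1, (Quot.out (e : Sym2 V)).2), hadj2⟩ with hd₀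
    have hw : Sum.inr (e, i) = hnode (r := r) d₀ ((i : ℕ) + 1) := by
      refine (hnode_mid_eq d₀ (by omega) (by omega) e i ?_ ?_).symm
      · exact hfe.symm
      · show (i : ℕ) = if d₀.toProd.1 = (Quot.out (s(d₀.toProd.1, d₀.toProd.2))).1
          then (i : ℕ) + 1 - 1 else r - 1 - ((i : ℕ) + 1)
        rw [show s(d₀.toProd.1, d₀.toProd.2) = (e : Sym2 V) from hfe, if_pos rfl]
        omega
    refine Finset.one_lt_card.mpr ⟨chainD d₀ ((i : ℕ) + 1) (by omega), ?_,
      (chainD d₀ (i : ℕ) (by omega)).symm, ?_, ?_⟩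
    · simp only [Finset.mem_filter, Finset.mem_univ, true_and, chainD_fst]
      exact hw.symm
    · simp only [Finset.mem_filter, Finset.mem_univ, true_and]
      show hnode (r := r) d₀ ((i : ℕ) + 1) = Sum.inr (e, i)
      exact hw.symm
    · intro hc
      have h2 : hnode (r := r) d₀ ((i : ℕ) + 1 + 1) = hnode (r := r) d₀ (i : ℕ) :=
        congrArg (fun D => D.toProd.2) hc
      have := hnode_inj (by omega) d₀ (by omega : (i : ℕ) + 1 + 1 ≤ r) (by omega) h2
      omega

lemma mout_gt (hr : 1 ≤ r) (k : V) (hk : 2 < G.degree k) : 2 < mout G r (Sum.inl k) := by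
  obtain ⟨a, ha, b, hb, c0, hc0, hab, hac, hbc⟩ := Finset.two_lt_card.mp hk
  rw [SimpleGraph.mem_neighborFinset] at ha hb hc0
  exact Finset.two_lt_card.mpr ⟨_, chainD0_mem hr k a ha, _, chainD0_mem hr k b hb,
    _, chainD0_mem hr k c0 hc0,
    fun hc => hab (chainD0_inj hr k a b ha hb hc),
    fun hc => hac (chainD0_inj hr k a c0 ha hc0 hc),
    fun hc => hbc (chainD0_inj hr k b c0 hb hc0 hc)⟩

lemma S_inl_zero (hr : 1 ≤ r) (hmin : ∀ x : V, 2 ≤ G.degree x) (hlam : ‖lam‖ = 1)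
    (hv : (nbMatrix (subdiv G r)).mulVec v = lam • v) (k : V) (hk : 2 < G.degree k) :
    Sin v (Sum.inl k) = 0 := by
  classical
  have hlam1 : (starRingEnd ℂ) lam * lam = 1 := by
    rw [mul_comm, Complex.mul_conj, ← Complex.sq_norm, hlam]
    norm_num
  -- the double sum, two ways
  have hswap : ∑ E : (subdiv G r).Dart, (starRingEnd ℂ) (v E) *
      ∑ D ∈ Finset.univ.filter
        (fun D : (subdiv G r).Dart => E.toProd.2 = D.toProd.1 ∧ E.toProd.1 ≠ D.toProd.2),
        (lam * v D)
      = ∑ D : (subdiv G r).Dart, (starRingEnd ℂ) (v D) * v D := by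
    have h1 : ∀ E : (subdiv G r).Dart, (starRingEnd ℂ) (v E) *
        ∑ D ∈ Finset.univ.filter
          (fun D : (subdiv G r).Dart => E.toProd.2 = D.toProd.1 ∧ E.toProd.1 ≠ D.toProd.2),
          (lam * v D)
        = ∑ D : (subdiv G r).Dart,
            if E.toProd.2 = D.toProd.1 ∧ E.toProd.1 ≠ D.toProd.2 then
              (starRingEnd ℂ) (v E) * (lam * v D) else 0 := by
      intro E
      rw [Finset.mul_sum, ← Finset.sum_filter]
    rw [Finset.sum_congr rfl (fun E _ => h1 E), Finset.sum_comm]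
    refine Finset.sum_congr rfl (fun D _ => ?_)
    have h2 : ∑ E : (subdiv G r).Dart,
        (if E.toProd.2 = D.toProd.1 ∧ E.toProd.1 ≠ D.toProd.2 then
          (starRingEnd ℂ) (v E) * (lam * v D) else 0)
        = (∑ E : (subdiv G r).Dart,
            if E.toProd.2 = D.toProd.1 ∧ E.toProd.1 ≠ D.toProd.2 then
              (starRingEnd ℂ) (v E) else 0) * (lam * v D) := by
      rw [Finset.sum_mul]
      refine Finset.sum_congr rfl (fun E _ => ?_)
      split <;> simp
    rw [h2]
    have h3 : (∑ E : (subdiv G r).Dart,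
        if E.toProd.2 = D.toProd.1 ∧ E.toProd.1 ≠ D.toProd.2 then
          (starRingEnd ℂ) (v E) else 0) = (starRingEnd ℂ) (lam * v D) := by
      rw [Bv_eq hv D, ← sum_pred v D, Finset.sum_filter, map_sum]
      refine Finset.sum_congr rfl (fun E _ => ?_)
      split <;> simp
    rw [h3]
    calc (starRingEnd ℂ) (lam * v D) * (lam * v D)
        = ((starRingEnd ℂ) lam * lam) * ((starRingEnd ℂ) (v D) * v D) := by
          rw [_root_.map_mul]; ring
      _ = (starRingEnd ℂ) (v D) * v D := by rw [hlam1, one_mul]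
  -- rewrite LHS of hswap using follow_sum
  rw [Finset.sum_congr rfl (fun E (_ : E ∈ Finset.univ) => by rw [follow_sum hv E])] at hswap
  have hzero : ∑ E : (subdiv G r).Dart,
      ((mout G r E.toProd.2 : ℂ) - 2) * Sin v E.toProd.2 * (starRingEnd ℂ) (v E) = 0 := by
    have expand : ∀ E : (subdiv G r).Dart, (starRingEnd ℂ) (v E) *
        (((mout G r E.toProd.2 : ℂ) - 2) * Sin v E.toProd.2 + v E)
        = ((mout G r E.toProd.2 : ℂ) - 2) * Sin v E.toProd.2 * (starRingEnd ℂ) (v E)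
          + (starRingEnd ℂ) (v E) * v E := by
      intro E; ring
    rw [Finset.sum_congr rfl (fun E _ => expand E), Finset.sum_add_distrib] at hswap
    linear_combination hswap
  -- group by head vertex
  have hfib := Finset.sum_fiberwise (Finset.univ : Finset (subdiv G r).Dart)
    (fun E => E.toProd.2)
    (fun E => ((mout G r E.toProd.2 : ℂ) - 2) * Sin v E.toProd.2 * (starRingEnd ℂ) (v E))
  rw [hzero] at hfib
  have hfib2 : ∑ w : V ⊕ (G.edgeSet × Fin (r - 1)),
      ((mout G r w : ℂ) - 2) * (Complex.normSq (Sin v w) : ℂ) = 0 := by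
    rw [← hfib]
    refine Finset.sum_congr rfl (fun w _ => ?_)
    have hin : ∑ E ∈ Finset.univ.filter (fun E : (subdiv G r).Dart => E.toProd.2 = w),
        ((mout G r E.toProd.2 : ℂ) - 2) * Sin v E.toProd.2 * (starRingEnd ℂ) (v E)
        = ((mout G r w : ℂ) - 2) * Sin v w * (starRingEnd ℂ) (Sin v w) := by
      have e1 : ∀ E ∈ Finset.univ.filter (fun E : (subdiv G r).Dart => E.toProd.2 = w),
          ((mout G r E.toProd.2 : ℂ) - 2) * Sin v E.toProd.2 * (starRingEnd ℂ) (v E)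
          = ((mout G r w : ℂ) - 2) * Sin v w * (starRingEnd ℂ) (v E) := by
        intro E hE
        simp only [Finset.mem_filter, Finset.mem_univ, true_and] at hE
        rw [hE]
      calc ∑ E ∈ Finset.univ.filter (fun E : (subdiv G r).Dart => E.toProd.2 = w),
          ((mout G r E.toProd.2 : ℂ) - 2) * Sin v E.toProd.2 * (starRingEnd ℂ) (v E)
          = ∑ E ∈ Finset.univ.filter (fun E : (subdiv G r).Dart => E.toProd.2 = w),
            ((mout G r w : ℂ) - 2) * Sin v w * (starRingEnd ℂ) (v E) :=
          Finset.sum_congr rfl e1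
        _ = ((mout G r w : ℂ) - 2) * Sin v w *
            ∑ E ∈ Finset.univ.filter (fun E : (subdiv G r).Dart => E.toProd.2 = w),
              (starRingEnd ℂ) (v E) := by rw [← Finset.mul_sum]
        _ = ((mout G r w : ℂ) - 2) * Sin v w * (starRingEnd ℂ) (Sin v w) := by
            rw [Sin, _root_.map_sum]
    rw [hin, mul_assoc, Complex.mul_conj]
  -- pass to the reals
  have hreal : ∑ w : V ⊕ (G.edgeSet × Fin (r - 1)),
      ((mout G r w : ℝ) - 2) * Complex.normSq (Sin v w) = 0 := by
    have : ((∑ w : V ⊕ (G.edgeSet × Fin (r - 1)),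
        ((mout G r w : ℝ) - 2) * Complex.normSq (Sin v w) : ℝ) : ℂ) = 0 := by
      push_cast
      rw [← hfib2]
    exact_mod_cast this
  have hnonneg : ∀ w ∈ (Finset.univ : Finset (V ⊕ (G.edgeSet × Fin (r - 1)))),
      0 ≤ ((mout G r w : ℝ) - 2) * Complex.normSq (Sin v w) := by
    intro w _
    apply mul_nonneg
    · have := two_le_mout hr hmin w
      have h2 : (2 : ℝ) ≤ (mout G r w : ℝ) := by exact_mod_cast this
      linarith
    · exact Complex.normSq_nonneg _
  have hterm := (Finset.sum_eq_zero_iff_of_nonneg hnonneg).mp hreal (Sum.inl k)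
    (Finset.mem_univ _)
  have hpos : 0 < (mout G r (Sum.inl k) : ℝ) - 2 := by
    have := mout_gt hr k hk
    have h2 : (2 : ℝ) < (mout G r (Sum.inl k) : ℝ) := by exact_mod_cast this
    linarith
  have hns : Complex.normSq (Sin v (Sum.inl k)) = 0 := by
    rcases mul_eq_zero.mp hterm with h | h
    · linarith
    · exact h
  exact Complex.normSq_eq_zero.mp hns

lemma chain_step (hv : (nbMatrix (subdiv G r)).mulVec v = lam • v) (d : G.Dart) {j : ℕ}
    (h2 : j + 1 ≤ r - 1) (hja : j + 1 < r) (hjb : j < r) :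
    lam * v (chainD d (j + 1) hja) = v (chainD d j hjb) := by
  have hr : 1 ≤ r := by omega
  have hfst : ∀ (j' : ℕ) (hj' : j' < r), (chainD (r := r) d j' hj').toProd.1 = hnode (r := r) d j' :=
    fun _ _ => rfl
  refine pred_unique hv (hnode (r := r) d (j + 1)) (chainD d j hjb)
    (chainD d (j + 1) hja).symm (chainD d (j + 1) hja) rfl rfl ?_ ?_ rfl ?_
  · intro hc
    have := congrArg (fun D => D.toProd.1) hc
    simp only [chainD_fst] at this
    have h3 : hnode (r := r) d j = hnode (r := r) d (j + 1 + 1) := this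
    have := hnode_inj hr d (by omega) (by omega) h3
    omega
  · intro E hE
    rcases dart_into_mid d (by omega) (by omega) E hE with h | h
    · left; exact h
    · right; exact h
  · intro hc
    have h3 : hnode (r := r) d j = hnode (r := r) d (j + 1 + 1) := hc
    have := hnode_inj hr d (by omega) (by omega) h3
    omega

lemma chain_aux (hv : (nbMatrix (subdiv G r)).mulVec v = lam • v) (hr : 1 ≤ r) (d : G.Dart) :
    ∀ j (hj : j ≤ r - 1), v (chainD d 0 (by omega)) = lam ^ j * v (chainD d j (by omega)) := by
  intro j
  induction j with
  | zero =>
    intro _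
    rw [pow_zero, one_mul]
  | succ n ih =>
    intro hj
    have h1 := ih (by omega)
    have h2 := chain_step hv d (j := n) (by omega) (by omega) (by omega)
    rw [h1, pow_succ, mul_assoc, h2]

lemma chain_total (hv : (nbMatrix (subdiv G r)).mulVec v = lam • v) (hr : 1 ≤ r) (d : G.Dart) :
    v (chainD d 0 (by omega)) = lam ^ (r - 1) * v (chainD d (r - 1) (by omega)) :=
  chain_aux hv hr d (r - 1) le_rfl

lemma hnode_last_inj (hr : 1 ≤ r) {k : V} {c c' : G.Dart} (hc : c.toProd.2 = k)
    (hc' : c'.toProd.2 = k)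
    (h1 : hnode (r := r) c (r - 1) = hnode (r := r) c' (r - 1)) : c = c' := by
  rcases (by omega : r = 1 ∨ 2 ≤ r) with hr1 | hr2
  · rw [congrArg (hnode (r := r) c) (by omega : r - 1 = 0),
      congrArg (hnode (r := r) c') (by omega : r - 1 = 0), hnode_zero, hnode_zero] at h1
    exact SimpleGraph.Dart.ext _ _ (Prod.ext (Sum.inl.inj h1) (hc.trans hc'.symm))
  · rw [hnode_mid c (by omega) le_rfl, hnode_mid c' (by omega) le_rfl] at h1
    simp only [Sum.inr.injEq, Prod.mk.injEq, Subtype.mk.injEq] at h1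
    have hs := h1.1
    rw [Sym2.eq_iff] at hs
    rcases hs with ⟨ha, hb⟩ | ⟨ha, hb⟩
    · exact SimpleGraph.Dart.ext _ _ (Prod.ext ha hb)
    · exact absurd (ha.trans (hc'.trans hc.symm)) c.adj.ne

lemma deg2_other {x y : V} (hdeg : G.degree x = 2) (hy : G.Adj x y) :
    ∃ z, G.Adj x z ∧ z ≠ y ∧ ∀ w, G.Adj x w → w ≠ y → w = z := by
  obtain ⟨a, b, hab, hset⟩ := Finset.card_eq_two.mp (hdeg : (G.neighborFinset x).card = 2)
  have hy' : y ∈ G.neighborFinset x := (SimpleGraph.mem_neighborFinset _ _ _).mpr hy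
  rw [hset] at hy'
  simp only [Finset.mem_insert, Finset.mem_singleton] at hy'
  have hmema : G.Adj x a := by
    rw [← SimpleGraph.mem_neighborFinset, hset]; simp
  have hmemb : G.Adj x b := by
    rw [← SimpleGraph.mem_neighborFinset, hset]; simp
  rcases hy' with rfl | rfl
  · refine ⟨b, hmemb, hab.symm, fun w hw hwy => ?_⟩
    have : w ∈ G.neighborFinset x := (SimpleGraph.mem_neighborFinset _ _ _).mpr hw
    rw [hset] at this
    simp only [Finset.mem_insert, Finset.mem_singleton] at this
    tauto
  · refine ⟨a, hmema, hab, fun w hw hwy => ?_⟩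
    have : w ∈ G.neighborFinset x := (SimpleGraph.mem_neighborFinset _ _ _).mpr hw
    rw [hset] at this
    simp only [Finset.mem_insert, Finset.mem_singleton] at this
    tauto

lemma deg2_mem {x y z w : V} (hdeg : G.degree x = 2) (hy : G.Adj x y) (hz : G.Adj x z)
    (hne : z ≠ y) (hw : G.Adj x w) : w = y ∨ w = z := by
  obtain ⟨z', _, hne', huniq⟩ := deg2_other hdeg hy
  by_cases h : w = y
  · left; exact h
  · right; rw [huniq w hw h, ← huniq z hz hne]

lemma deg2_vstep (hv : (nbMatrix (subdiv G r)).mulVec v = lam • v) (hr : 1 ≤ r) (e e' : G.Dart)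
    (hdeg : G.degree e.toProd.1 = 2) (h2 : e'.toProd.2 = e.toProd.1)
    (h1 : e'.toProd.1 ≠ e.toProd.2) :
    lam * v (chainD e 0 (by omega)) = v (chainD e' (r - 1) (by omega)) := by
  refine pred_unique hv (Sum.inl e.toProd.1) (chainD e' (r - 1) (by omega))
    (chainD e.symm (r - 1) (by omega)) (chainD e 0 (by omega)) ?_ ?_ ?_ ?_ ?_ ?_
  · show hnode (r := r) e' (r - 1 + 1) = Sum.inl e.toProd.1
    rw [hnode_ge hr e' (by omega), h2]
  · show hnode (r := r) e.symm (r - 1 + 1) = Sum.inl e.toProd.1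
    rw [hnode_ge hr e.symm (by omega)]
    rfl
  · intro hc
    have hd := hnode_last_inj hr (k := e.toProd.1) h2 rfl (congrArg (fun D => D.toProd.1) hc)
    exact h1 (congrArg (fun x => x.toProd.1) hd)
  · intro E hE
    obtain ⟨c, hck, hEc⟩ := dart_into_inl hr E e.toProd.1 hE
    have hcadj : G.Adj e.toProd.1 c.toProd.1 := (hck ▸ c.adj).symm
    have he'adj : G.Adj e.toProd.1 e'.toProd.1 := (h2 ▸ e'.adj).symm
    rcases deg2_mem hdeg e.adj he'adj h1 hcadj with hc1 | hc1
    · right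
      rw [hEc]
      have hce : c = e.symm := SimpleGraph.Dart.ext _ _ (Prod.ext hc1 hck)
      rw [hce]
    · left
      rw [hEc]
      have hce : c = e' := SimpleGraph.Dart.ext _ _ (Prod.ext hc1 (hck.trans h2.symm))
      rw [hce]
  · exact hnode_zero e
  · intro hc
    have hc0 : hnode (r := r) e' (r - 1) = hnode (r := r) e 1 := hc
    have hc' : hnode (r := r) e' (r - 1) = hnode (r := r) e.symm (r - 1) := by
      rw [hc0, hnode_symm hr e (by omega : r - 1 ≤ r),
        congrArg (hnode (r := r) e) (by omega : r - (r - 1) = 1)]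
    have hd := hnode_last_inj hr (k := e.toProd.1) h2 rfl hc'
    exact h1 (congrArg (fun x => x.toProd.1) hd)

lemma deg2_fstep (hv : (nbMatrix (subdiv G r)).mulVec v = lam • v) (hr : 1 ≤ r)
    (hlam0 : lam ≠ 0) {e e' : G.Dart}
    (hdeg : G.degree e.toProd.1 = 2) (h2 : e'.toProd.2 = e.toProd.1)
    (h1 : e'.toProd.1 ≠ e.toProd.2) :
    v (chainD e 0 (by omega)) = v (chainD e' 0 (by omega)) / lam ^ r := by
  have ha := deg2_vstep hv hr e e' hdeg h2 h1
  have hb := chain_total hv hr e'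
  have hpow : lam ^ r = lam ^ (r - 1) * lam := by
    conv_lhs => rw [show r = r - 1 + 1 by omega]
    rw [pow_succ]
  rw [eq_div_iff (pow_ne_zero _ hlam0), hb, ← ha, hpow]
  ring

/-- `e` reaches a vertex of degree `> 2` by backwards steps within `n` steps -/
def ReachBig (G : SimpleGraph V) [DecidableRel G.Adj] : ℕ → G.Dart → Prop
  | 0, e => 2 < G.degree e.toProd.1
  | n + 1, e => 2 < G.degree e.toProd.1 ∨
      ∀ e' : G.Dart, e'.toProd.2 = e.toProd.1 → e'.toProd.1 ≠ e.toProd.2 → ReachBig G n e'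

def PredRel (G : SimpleGraph V) (p q : G.Dart) : Prop :=
  p.toProd.2 = q.toProd.1 ∧ p.toProd.1 ≠ q.toProd.2

lemma seq_exists (hmin : ∀ x : V, 2 ≤ G.degree x) :
    ∀ (n : ℕ) (e : G.Dart), ¬ ReachBig G n e →
    ∃ f : ℕ → G.Dart, f 0 = e ∧ ∀ i < n,
      PredRel G (f (i + 1)) (f i) ∧ G.degree ((f i).toProd.1) = 2 := by
  intro n
  induction n with
  | zero =>
    intro e _
    exact ⟨fun _ => e, rfl, by omega⟩
  | succ n ih =>
    intro e he
    rw [ReachBig] at he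
    push_neg at he
    obtain ⟨hnb, e', hp2, hp1, hnr⟩ := he
    obtain ⟨f', hf0, hf⟩ := ih e' hnr
    refine ⟨fun i => Nat.casesOn i e (fun i' => f' i'), rfl, ?_⟩
    intro i hi
    cases i with
    | zero =>
      constructor
      · show PredRel G (f' 0) e
        rw [hf0]
        exact ⟨hp2, hp1⟩
      · show G.degree e.toProd.1 = 2
        exact le_antisymm hnb (hmin _)
    | succ i' => exact hf i' (by omega)

lemma pred_det {p q q' : G.Dart} (hq : PredRel G p q) (hq' : PredRel G p q')
    (hdeg : G.degree q.toProd.1 = 2) : q = q' := by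
  have h11 : q.toProd.1 = q'.toProd.1 := hq.1.symm.trans hq'.1
  have hp : G.Adj q.toProd.1 p.toProd.1 := (hq.1 ▸ p.adj).symm
  obtain ⟨z, hz, hzne, huniq⟩ := deg2_other hdeg hp
  have h2 : q.toProd.2 = z := huniq _ q.adj (fun hh => hq.2 hh.symm)
  have h2' : q'.toProd.2 = z := by
    apply huniq
    · rw [h11]; exact q'.adj
    · exact fun hh => hq'.2 hh.symm
  exact SimpleGraph.Dart.ext _ _ (Prod.ext h11 (h2.trans h2'.symm))

lemma reach_big (hmin : ∀ x : V, 2 ≤ G.degree x) (e : G.Dart)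
    (he : 2 < G.degree e.toProd.2) : ReachBig G (Fintype.card G.Dart) e := by
  by_contra hc
  obtain ⟨f, hf0, hf⟩ := seq_exists hmin _ e hc
  set N := Fintype.card G.Dart with hN
  have hmain : ∀ a b : ℕ, a < b → b ≤ N → f a = f b → False := by
    intro a b hab hbN hfab
    have hdown : ∀ m, m ≤ a → f (a - m) = f (b - m) := by
      intro m
      induction m with
      | zero => intro _; simpa using hfab
      | succ t iht =>
        intro hm
        have hprev := iht (by omega)
        have h1 := hf (a - (t + 1)) (by omega)
        rw [(by omega : a - (t + 1) + 1 = a - t)] at h1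
        have h2 := hf (b - (t + 1)) (by omega)
        rw [(by omega : b - (t + 1) + 1 = b - t)] at h2
        rw [hprev] at h1
        exact pred_det h1.1 h2.1 h1.2
    have hfinal := hdown a le_rfl
    rw [Nat.sub_self, hf0] at hfinal
    have hstep := hf (b - a - 1) (by omega)
    have h1 : (f (b - a - 1 + 1)).toProd.2 = (f (b - a - 1)).toProd.1 := hstep.1.1
    rw [(by omega : b - a - 1 + 1 = b - a), ← hfinal] at h1
    rw [h1, hstep.2] at he
    exact absurd he (lt_irrefl _)
  obtain ⟨i, j0, hij, hfe⟩ := Fintype.exists_ne_map_eq_of_card_lt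
    (fun i : Fin (N + 1) => f i) (by simp [hN])
  rcases lt_or_gt_of_ne (fun h : (i : ℕ) = (j0 : ℕ) => hij (Fin.ext h)) with h | h
  · exact hmain i j0 h (by omega) hfe
  · exact hmain j0 i h (by omega) hfe.symm

lemma sum_into_inl (hr : 1 ≤ r) (k : V) :
    ∑ e ∈ Finset.univ.filter (fun e : G.Dart => e.toProd.2 = k),
      v (chainD e (r - 1) (by omega)) = Sin v (Sum.inl k) := by
  rw [Sin]
  refine Finset.sum_bij (fun e _ => chainD e (r - 1) (by omega)) ?_ ?_ ?_ ?_
  · intro e he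
    simp only [Finset.mem_filter, Finset.mem_univ, true_and] at he ⊢
    show hnode (r := r) e (r - 1 + 1) = Sum.inl k
    rw [hnode_ge hr e (by omega), he]
  · intro e he e' he' hc
    simp only [Finset.mem_filter, Finset.mem_univ, true_and] at he he'
    exact chainD_last_inj hr he he' hc
  · intro E hE
    simp only [Finset.mem_filter, Finset.mem_univ, true_and] at hE
    obtain ⟨c, hck, hEc⟩ := dart_into_inl hr E k hE
    exact ⟨c, by simp only [Finset.mem_filter, Finset.mem_univ, true_and]; exact hck, hEc.symm⟩
  · intro e _; rfl

variable {u : G.Dart → ℂ}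

lemma u_big (hr : 1 ≤ r)
    (hu1 : ∀ (d : G.Dart) (D : (subdiv G r).Dart),
      2 < G.degree d.toProd.1 →
      D.toProd.1 = Sum.inl d.toProd.1 →
      (D.toProd.2 = Sum.inl d.toProd.2 ∨
        ∃ (he : s(d.toProd.1, d.toProd.2) ∈ G.edgeSet) (i : Fin (r - 1)),
          D.toProd.2 = Sum.inr (⟨s(d.toProd.1, d.toProd.2), he⟩, i)) →
      u d = v D)
    (e : G.Dart) (hbig : 2 < G.degree e.toProd.1) :
    u e = v (chainD e 0 (by omega)) := by
  apply hu1 e (chainD e 0 (by omega)) hbig (hnode_zero e)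
  rcases (by omega : r = 1 ∨ 2 ≤ r) with h2 | h2
  · left
    show hnode (r := r) e 1 = Sum.inl e.toProd.2
    rw [hnode_ge hr e (by omega)]
  · right
    refine ⟨G.mem_edgeSet.mpr e.adj,
      ⟨if e.toProd.1 = (Quot.out (s(e.toProd.1, e.toProd.2))).1 then 0 else r - 2,
        by split <;> omega⟩, ?_⟩
    show hnode (r := r) e 1 = _
    rw [hnode_mid e (by omega) (by omega)]
    refine congrArg Sum.inr (Prod.ext rfl (Fin.ext ?_))
    show (if e.toProd.1 = (Quot.out (s(e.toProd.1, e.toProd.2))).1 then 1 - 1 else r - 1 - 1)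
      = if e.toProd.1 = (Quot.out (s(e.toProd.1, e.toProd.2))).1 then 0 else r - 2
    split <;> omega

lemma u_eq_aux (hv : (nbMatrix (subdiv G r)).mulVec v = lam • v) (hr : 1 ≤ r)
    (hmin : ∀ x : V, 2 ≤ G.degree x) (hlam0 : lam ≠ 0)
    (hu1 : ∀ (d : G.Dart) (D : (subdiv G r).Dart),
      2 < G.degree d.toProd.1 →
      D.toProd.1 = Sum.inl d.toProd.1 →
      (D.toProd.2 = Sum.inl d.toProd.2 ∨
        ∃ (he : s(d.toProd.1, d.toProd.2) ∈ G.edgeSet) (i : Fin (r - 1)),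
          D.toProd.2 = Sum.inr (⟨s(d.toProd.1, d.toProd.2), he⟩, i)) →
      u d = v D)
    (hu2 : ∀ d d' : G.Dart, G.degree d.toProd.1 = 2 →
      d'.toProd.2 = d.toProd.1 → d'.toProd.1 ≠ d.toProd.2 → u d = u d' / lam ^ r) :
    ∀ (n : ℕ) (e : G.Dart), ReachBig G n e → u e = v (chainD e 0 (by omega)) := by
  intro n
  induction n with
  | zero =>
    intro e he
    exact u_big hr hu1 e he
  | succ n ih =>
    intro e he
    by_cases hbig : 2 < G.degree e.toProd.1
    · exact u_big hr hu1 e hbig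
    · have hdeg : G.degree e.toProd.1 = 2 := le_antisymm (not_lt.mp hbig) (hmin _)
      rcases he with hbig' | hstep
      · exact absurd hbig' hbig
      · obtain ⟨z, hz, hzne, _⟩ := deg2_other hdeg e.adj
        have hpred2 : (⟨(z, e.toProd.1), hz.symm⟩ : G.Dart).toProd.2 = e.toProd.1 := rfl
        have hpred1 : (⟨(z, e.toProd.1), hz.symm⟩ : G.Dart).toProd.1 ≠ e.toProd.2 := hzne
        have h1 := hu2 e ⟨(z, e.toProd.1), hz.symm⟩ hdeg hpred2 hpred1
        have h2 := ih ⟨(z, e.toProd.1), hz.symm⟩ (hstep _ hpred2 hpred1)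
        have h3 := deg2_fstep (e := e) (e' := ⟨(z, e.toProd.1), hz.symm⟩) hv hr hlam0
          hdeg hpred2 hpred1
        rw [h1, h2, h3]

end Spectral

end SubdivAux

open SubdivAux in
/-- Let H be the r-subdivision of G and v an eigenfunction of B_H with unitary eigenvalue λ.
If u is defined on the darts of G by `u (k→l) = v (k → k₁(l))` whenever deg k > 2 (where
`k₁(l)` is the first node after k on the subdivision chain from k to l), and by
`u (k→j) = u (i→k) / λ^r` whenever deg k = 2 with neighbors i ≠ j, then u is an
eigenfunction of B_G with eigenvalue λ^r. -/
theorem subdivision_eigenfunction {V : Type} [Fintype V] [DecidableEq V]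
    (G : SimpleGraph V) [DecidableRel G.Adj] (hmin : ∀ x : V, 2 ≤ G.degree x)
    (r : ℕ) (hr : 1 ≤ r) (lam : ℂ) (hlam : ‖lam‖ = 1)
    (v : (subdiv G r).Dart → ℂ) (hv0 : v ≠ 0)
    (hv : (nbMatrix (subdiv G r)).mulVec v = lam • v)
    (u : G.Dart → ℂ)
    (hu1 : ∀ (d : G.Dart) (D : (subdiv G r).Dart),
      2 < G.degree d.toProd.1 →
      D.toProd.1 = Sum.inl d.toProd.1 →
      (D.toProd.2 = Sum.inl d.toProd.2 ∨
        ∃ (he : s(d.toProd.1, d.toProd.2) ∈ G.edgeSet) (i : Fin (r - 1)),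
          D.toProd.2 = Sum.inr (⟨s(d.toProd.1, d.toProd.2), he⟩, i)) →
      u d = v D)
    (hu2 : ∀ d d' : G.Dart, G.degree d.toProd.1 = 2 →
      d'.toProd.2 = d.toProd.1 → d'.toProd.1 ≠ d.toProd.2 → u d = u d' / lam ^ r) :
    (nbMatrix G).mulVec u = (lam ^ r) • u := by
  classical
  have hlam0 : lam ≠ 0 := by
    intro h0
    rw [h0] at hlam
    simp at hlam
  funext d
  have hlhs : (nbMatrix G).mulVec u d
      = ∑ e ∈ Finset.univ.filter (fun e : G.Dart =>
          e.toProd.2 = d.toProd.1 ∧ e.toProd.1 ≠ d.toProd.2), u e := by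
    rw [Finset.sum_filter]
    show ∑ e : G.Dart, nbMatrix G d e * u e = _
    refine Finset.sum_congr rfl fun e _ => ?_
    by_cases hc : e.toProd.2 = d.toProd.1 ∧ e.toProd.1 ≠ d.toProd.2 <;> simp [nbMatrix, hc]
  show (nbMatrix G).mulVec u d = (lam ^ r • u) d
  rw [hlhs, Pi.smul_apply, smul_eq_mul]
  by_cases hbig : 2 < G.degree d.toProd.1
  · have hud : u d = v (SubdivAux.chainD d 0 (by omega)) := SubdivAux.u_big hr hu1 d hbig
    have hterm : ∀ e ∈ Finset.univ.filter (fun e : G.Dart =>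
        e.toProd.2 = d.toProd.1 ∧ e.toProd.1 ≠ d.toProd.2),
        u e = lam ^ (r - 1) * v (SubdivAux.chainD e (r - 1) (by omega)) := by
      intro e he
      simp only [Finset.mem_filter, Finset.mem_univ, true_and] at he
      have hre := SubdivAux.reach_big hmin e (by rw [he.1]; exact hbig)
      rw [SubdivAux.u_eq_aux hv hr hmin hlam0 hu1 hu2 _ e hre]
      exact SubdivAux.chain_total hv hr e
    rw [Finset.sum_congr rfl hterm, ← Finset.mul_sum]
    have hset : Finset.univ.filter (fun e : G.Dart =>
        e.toProd.2 = d.toProd.1 ∧ e.toProd.1 ≠ d.toProd.2)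
        = (Finset.univ.filter (fun e : G.Dart => e.toProd.2 = d.toProd.1)).erase d.symm := by
      ext e
      simp only [Finset.mem_filter, Finset.mem_erase, Finset.mem_univ, true_and]
      constructor
      · rintro ⟨hh1, hh2⟩
        exact ⟨fun hE => hh2 (by rw [hE]; rfl), hh1⟩
      · rintro ⟨hh1, hh2⟩
        exact ⟨hh2, fun hE => hh1 (SimpleGraph.Dart.ext _ _ (Prod.ext hE hh2))⟩
    rw [hset, Finset.sum_erase_eq_sub (by
        simp only [Finset.mem_filter, Finset.mem_univ, true_and]; rfl),
      SubdivAux.sum_into_inl hr d.toProd.1,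
      SubdivAux.S_inl_zero hr hmin hlam hv d.toProd.1 hbig, zero_sub]
    have hBv := SubdivAux.Bv_eq hv (SubdivAux.chainD d 0 (by omega))
    rw [SubdivAux.chainD_fst, SubdivAux.hnode_zero,
      SubdivAux.S_inl_zero hr hmin hlam hv d.toProd.1 hbig, zero_sub,
      SubdivAux.chainD_symm] at hBv
    rw [hud]
    have hpow : lam ^ r = lam ^ (r - 1) * lam := by
      conv_lhs => rw [show r = r - 1 + 1 by omega]
      rw [pow_succ]
    rw [hpow, mul_assoc, hBv]
    rfl
  · have hdeg : G.degree d.toProd.1 = 2 := le_antisymm (not_lt.mp hbig) (hmin _)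
    obtain ⟨z, hz, hzne, huniq⟩ := SubdivAux.deg2_other hdeg d.adj
    have hset : Finset.univ.filter (fun e : G.Dart =>
        e.toProd.2 = d.toProd.1 ∧ e.toProd.1 ≠ d.toProd.2)
        = {(⟨(z, d.toProd.1), hz.symm⟩ : G.Dart)} := by
      ext e
      simp only [Finset.mem_filter, Finset.mem_univ, true_and, Finset.mem_singleton]
      constructor
      · rintro ⟨hh1, hh2⟩
        have he1 : e.toProd.1 = z := huniq _ ((hh1 ▸ e.adj).symm) hh2
        exact SimpleGraph.Dart.ext _ _ (Prod.ext he1 hh1)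
      · rintro rfl
        exact ⟨rfl, hzne⟩
    rw [hset, Finset.sum_singleton]
    have h1 := hu2 d ⟨(z, d.toProd.1), hz.symm⟩ hdeg rfl hzne
    rw [h1]
    field_simp
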